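/- A binary word w is 1-prefix normal if and only if every factor v of w with |v|₁ = i satisfies |v| ≥ pos₁(w, i), where pos₁(w, i) is the position of the i-th occurrence of 1 in w. -/

import Mathlib

/-- `w` is 1-prefix normal: no factor of `w` has more 1s than the prefix of the same length. -/
def IsPrefixNormal1 (w : List Bool) : Prop :=
  ∀ v : List Bool, v <:+: w → v.count true ≤ (w.take v.length).count true

/-- Position of the `i`-th 1 in `w`: least `k` such that the length-`k` prefix contains `i` ones. -/
noncomputable def pos1 (w : List Bool) (i : ℕ) : ℕ :=
  sInf {k : ℕ | ((w.take k).count true) = i}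

private lemma ivt (f : ℕ → ℕ) (hs : ∀ k, f (k + 1) ≤ f k + 1) :
    ∀ n i, i ≤ f n → ∃ k ≤ n, f k = i ∨ i < f 0 := by
  intro n
  induction n with
  | zero => intro i hi; exact ⟨0, le_refl 0, by omega⟩
  | succ n ih =>
    intro i hi
    by_cases h : i ≤ f n
    · obtain ⟨k, hk, hfk⟩ := ih i h
      exact ⟨k, by omega, hfk⟩
    · exact ⟨n + 1, le_refl _, by have := hs n; omega⟩

private lemma take_step (w : List Bool) (k : ℕ) :
    ((w.take (k + 1)).count true) ≤ ((w.take k).count true) + 1 := by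
  rw [List.take_succ, List.count_append]
  have h1 : (w[k]?).toList.count true ≤ (w[k]?).toList.length := List.count_le_length
  have h2 : (w[k]?).toList.length ≤ 1 := by cases w[k]? <;> simp
  omega

private lemma take_mono (w : List Bool) {a b : ℕ} (h : a ≤ b) :
    ((w.take a).count true) ≤ ((w.take b).count true) := by
  have : w.take a = (w.take b).take a := by rw [List.take_take, min_eq_left h]
  rw [this]
  exact ((w.take b).take_prefix a).sublist.count_le true

theorem stmt_9 (w : List Bool) :
    IsPrefixNormal1 w ↔
      ∀ v : List Bool, v <:+: w → pos1 w (v.count true) ≤ v.length := by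
  have hivt : ∀ n i, i ≤ (w.take n).count true → ∃ k ≤ n, (w.take k).count true = i := by
    intro n i hi
    obtain ⟨k, hk, hfk⟩ := ivt (fun k => (w.take k).count true) (take_step w) n i hi
    refine ⟨k, hk, ?_⟩
    rcases hfk with h | h
    · exact h
    · simp at h
  constructor
  · intro hpn v hv
    obtain ⟨k, hk, hfk⟩ := hivt v.length (v.count true) (hpn v hv)
    exact le_trans (Nat.sInf_le hfk) hk
  · intro hpos v hv
    have hne : {k : ℕ | ((w.take k).count true) = v.count true}.Nonempty := by
      obtain ⟨k, _, hfk⟩ := hivt w.length (v.count true)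
        (by rw [List.take_length]; exact hv.sublist.count_le true)
      exact ⟨k, hfk⟩
    have hmem := Nat.sInf_mem hne
    have : ((w.take (pos1 w (v.count true))).count true) = v.count true := hmem
    calc v.count true = (w.take (pos1 w (v.count true))).count true := this.symm
      _ ≤ (w.take v.length).count true := take_mono w (hpos v hv)
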